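/- Let K = {z ∈ ℂ : 1/2 ≤ |z| ≤ 2} and f(z) = -1/z². There is no sequence (g_n) of meromorphic, locally univalent functions on all of ℂ converging to f uniformly on K with respect to the chordal metric. -/

import Mathlib

/-- The chordal metric on the Riemann sphere (restricted to finite points). -/
noncomputable def chordal (z w : ℂ) : ℝ :=
  ‖z - w‖ /
    (Real.sqrt (1 + ‖z‖ ^ 2) * Real.sqrt (1 + ‖w‖ ^ 2))

/-- g has a simple pole at z. -/
def SimplePoleAt (g : ℂ → ℂ) (z : ℂ) : Prop :=
  ∃ c : ℂ, c ≠ 0 ∧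
    Filter.Tendsto (fun w => (w - z) * g w) (nhdsWithin z {z}ᶜ) (nhds c)

/-- g is meromorphic and locally univalent on ℂ: only simple poles, and g' ≠ 0 wherever
g is finite. -/
def LocUnivMeroOn (g : ℂ → ℂ) : Prop :=
  MeromorphicOn g Set.univ ∧
    ∀ z : ℂ, (AnalyticAt ℂ g z ∧ deriv g z ≠ 0) ∨ SimplePoleAt g z

namespace Complex

noncomputable def abs : AbsoluteValue ℂ ℝ := IsAbsoluteValue.toAbsoluteValue (norm : ℂ → ℝ)

lemma norm_eq_abs (z : ℂ) : ‖z‖ = abs z := rfl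

@[simp] lemma abs_ofReal (r : ℝ) : abs (r : ℂ) = |r| := by
  rw [← norm_eq_abs, Complex.norm_real, Real.norm_eq_abs]

@[simp] lemma abs_two : abs 2 = 2 := by
  rw [← norm_eq_abs]; norm_num

@[simp] lemma abs_ofNat (n : ℕ) [n.AtLeastTwo] : abs (OfNat.ofNat n : ℂ) = OfNat.ofNat n := by
  rw [← norm_eq_abs]; simp

end Complex

open Complex Filter Metric Set Topology intervalIntegral

section Helpers

variable {g : ℂ → ℂ} {p z : ℂ}

open Classical in
noncomputable def Fg (g : ℂ → ℂ) : ℂ → ℂ :=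
  fun z => if AnalyticAt ℂ g z then (deriv g z)⁻¹ else 0

lemma SimplePoleAt.not_analyticAt (h : SimplePoleAt g p) : ¬ AnalyticAt ℂ g p := by
  intro ha
  obtain ⟨c, hc, htend⟩ := h
  have h0 : Tendsto (fun w => (w - p) * g w) (𝓝 p) (𝓝 ((p - p) * g p)) :=
    (((continuous_id.sub continuous_const).continuousAt)).mul ha.continuousAt
  have h0' : Tendsto (fun w => (w - p) * g w) (𝓝[≠] p) (𝓝 0) := by
    simpa using h0.mono_left nhdsWithin_le_nhds
  exact hc (tendsto_nhds_unique htend h0')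

lemma Fg_eq_of_analyticAt (h : AnalyticAt ℂ g z) : Fg g z = (deriv g z)⁻¹ := by
  simp only [Fg, if_pos h]

lemma Fg_eq_zero_of_pole (h : SimplePoleAt g p) : Fg g p = 0 := by
  simp only [Fg, if_neg h.not_analyticAt]

lemma deriv_ne_zero_of_analyticAt (hg : LocUnivMeroOn g) (h : AnalyticAt ℂ g z) :
    deriv g z ≠ 0 := by
  rcases hg.2 z with ⟨-, hd⟩ | hpole
  · exact hd
  · exact absurd h hpole.not_analyticAt

lemma SimplePoleAt.tendsto_norm (h : SimplePoleAt g p) :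
    Tendsto (fun w => ‖g w‖) (𝓝[≠] p) atTop := by
  obtain ⟨c, hc, htend⟩ := h
  have h1 : Tendsto (fun w => ‖(w - p) * g w‖) (𝓝[≠] p) (𝓝 ‖c‖) := htend.norm
  have h3 : Tendsto (fun w : ℂ => ‖w - p‖) (𝓝[≠] p) (𝓝[>] (0:ℝ)) := by
    rw [tendsto_nhdsWithin_iff]
    constructor
    · have : Tendsto (fun w : ℂ => ‖w - p‖) (𝓝 p) (𝓝 ‖p - p‖) :=
        ((continuous_id.sub continuous_const).norm).continuousAt
      simpa using this.mono_left nhdsWithin_le_nhds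
    · filter_upwards [self_mem_nhdsWithin] with w hw
      simpa [Set.mem_Ioi, norm_pos_iff, sub_ne_zero] using hw
  have h2 : Tendsto (fun w : ℂ => ‖w - p‖⁻¹) (𝓝[≠] p) atTop :=
    tendsto_inv_nhdsGT_zero.comp h3
  have h4 := Filter.Tendsto.pos_mul_atTop (norm_pos_iff.mpr hc) h1 h2
  apply h4.congr'
  filter_upwards [self_mem_nhdsWithin] with w hw
  have hwp : w - p ≠ 0 := sub_ne_zero.mpr hw
  rw [norm_mul]
  rw [mul_inv_eq_iff_eq_mul₀ (norm_ne_zero_iff.mpr hwp)]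
  ring

lemma SimplePoleAt.eventually_analyticAt (hg : LocUnivMeroOn g) (h : SimplePoleAt g p) :
    ∀ᶠ w in 𝓝[≠] p, AnalyticAt ℂ g w := by
  obtain ⟨c, hc, htend⟩ := h
  have hbd : ∀ᶠ w in 𝓝[≠] p, ‖(w - p) * g w‖ < ‖c‖ + 1 :=
    htend.norm.eventually_lt_const (by linarith [norm_nonneg c])
  rw [eventually_nhdsWithin_iff] at hbd ⊢
  obtain ⟨U, hU, hUo, hUp⟩ := _root_.eventually_nhds_iff.mp hbd
  rw [_root_.eventually_nhds_iff]
  refine ⟨U, ?_, hUo, hUp⟩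
  intro w hw hwp
  replace hwp : w ≠ p := hwp
  rcases hg.2 w with ⟨ha, -⟩ | hpole
  · exact ha
  exfalso
  have htop := hpole.tendsto_norm
  have hwp' : (0:ℝ) < ‖w - p‖ := by simp [norm_pos_iff, sub_ne_zero, hwp]
  have hnrm : Tendsto (fun v : ℂ => ‖v - p‖) (𝓝[≠] w) (𝓝 ‖w - p‖) :=
    (((continuous_id.sub continuous_const).norm).continuousAt).mono_left nhdsWithin_le_nhds
  have h4 : Tendsto (fun v : ℂ => ‖v - p‖ * ‖g v‖) (𝓝[≠] w) atTop :=
    Filter.Tendsto.pos_mul_atTop hwp' hnrm htop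
  have h5 : ∀ᶠ v in 𝓝[≠] w, ‖(v - p) * g v‖ < ‖c‖ + 1 := by
    have hUmem : ∀ᶠ v in 𝓝[≠] w, v ∈ U :=
      (hUo.eventually_mem hw).filter_mono nhdsWithin_le_nhds
    have hpne : ∀ᶠ v in 𝓝[≠] w, v ≠ p := by
      have : ∀ᶠ v in 𝓝 w, v ≠ p := (isOpen_compl_singleton.eventually_mem (by exact hwp))
      exact this.filter_mono nhdsWithin_le_nhds
    filter_upwards [hUmem, hpne] with v hv hvp
    exact hU v hv hvp
  have h6 : ∀ᶠ v in 𝓝[≠] w, ‖c‖ + 1 < ‖(v - p) * g v‖ := by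
    have := h4.eventually_gt_atTop (‖c‖ + 1)
    filter_upwards [this] with v hv
    rwa [norm_mul]
  obtain ⟨v, hv5, hv6⟩ := (h5.and h6).exists
  exact absurd (hv6.trans hv5) (lt_irrefl _)

lemma analyticAt_deriv {u : ℂ → ℂ} {z : ℂ} (h : AnalyticAt ℂ u z) :
    AnalyticAt ℂ (deriv u) z := by
  obtain ⟨s, hs, hos⟩ := h.exists_mem_nhds_analyticOnNhd
  exact hos.deriv z (mem_of_mem_nhds hs)

lemma Fg_analyticAt_of_analyticAt (hg : LocUnivMeroOn g) (h : AnalyticAt ℂ g z) :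
    AnalyticAt ℂ (Fg g) z ∧ Fg g z ≠ 0 := by
  have hd := deriv_ne_zero_of_analyticAt hg h
  have hev : (fun w => (deriv g w)⁻¹) =ᶠ[𝓝 z] Fg g := by
    filter_upwards [h.eventually_analyticAt] with w hw
    exact (Fg_eq_of_analyticAt hw).symm
  have ha : AnalyticAt ℂ (fun w => (deriv g w)⁻¹) z := (analyticAt_deriv h).inv hd
  exact ⟨ha.congr hev, by rw [Fg_eq_of_analyticAt h]; exact inv_ne_zero hd⟩

lemma Fg_pole_localform (hg : LocUnivMeroOn g) (h : SimplePoleAt g p) :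
    ∃ ψ : ℂ → ℂ, AnalyticAt ℂ ψ p ∧ ψ p ≠ 0 ∧
      ∀ᶠ w in 𝓝 p, Fg g w = (w - p) ^ 2 * ψ w := by
  obtain ⟨c, hc, htend⟩ := h
  have hpole : SimplePoleAt g p := ⟨c, hc, htend⟩
  have han : ∀ᶠ w in 𝓝[≠] p, AnalyticAt ℂ g w := hpole.eventually_analyticAt hg
  classical
  set φ : ℂ → ℂ := Function.update (fun w => (w - p) * g w) p c with hφdef
  have hφeq : ∀ w : ℂ, w ≠ p → φ w = (w - p) * g w := fun w hw =>
    Function.update_of_ne hw _ _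
  have hφc : ContinuousAt φ p := by
    rw [hφdef, continuousAt_update_same]
    exact htend
  have hφd : ∀ᶠ w in 𝓝[≠] p, DifferentiableAt ℂ φ w := by
    filter_upwards [han, self_mem_nhdsWithin] with w hw hwp
    replace hwp : w ≠ p := hwp
    have hdiff : DifferentiableAt ℂ (fun v => (v - p) * g v) w :=
      ((differentiableAt_id.sub (differentiableAt_const _)).mul hw.differentiableAt)
    apply hdiff.congr_of_eventuallyEq
    filter_upwards [isOpen_compl_singleton.eventually_mem (show w ∈ ({p}ᶜ : Set ℂ) from hwp)]
      with v hv
    exact hφeq v hv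
  have hφa : AnalyticAt ℂ φ p :=
    Complex.analyticAt_of_differentiable_on_punctured_nhds_of_continuousAt hφd hφc
  have hφp : φ p = c := Function.update_self _ _ _
  set ψden : ℂ → ℂ := fun w => (w - p) * deriv φ w - φ w with hψdendef
  have hψdena : AnalyticAt ℂ ψden p :=
    (((analyticAt_id.sub analyticAt_const).mul (analyticAt_deriv hφa)).sub hφa)
  have hψdenp : ψden p = -c := by simp [hψdendef, hφp]
  have hψdenne : ψden p ≠ 0 := by rw [hψdenp]; exact neg_ne_zero.mpr hc
  refine ⟨fun w => (ψden w)⁻¹, hψdena.inv hψdenne, inv_ne_zero hψdenne, ?_⟩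
  have key : ∀ᶠ w in 𝓝[≠] p, Fg g w = (w - p) ^ 2 * (ψden w)⁻¹ := by
    filter_upwards [han, hφa.eventually_analyticAt.filter_mono nhdsWithin_le_nhds,
      self_mem_nhdsWithin] with w hwga hwφa hwp
    replace hwp : w ≠ p := hwp
    have hwsub : w - p ≠ 0 := sub_ne_zero.mpr hwp
    have hgw : g =ᶠ[𝓝 w] fun v => φ v / (v - p) := by
      filter_upwards [isOpen_compl_singleton.eventually_mem (show w ∈ ({p}ᶜ : Set ℂ) from hwp)]
        with v hv
      replace hv : v ≠ p := hv
      rw [hφeq v hv, mul_div_cancel_left₀ _ (sub_ne_zero.mpr hv)]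
    have hderiv : deriv g w = ψden w / (w - p) ^ 2 := by
      rw [hgw.deriv_eq]
      rw [deriv_fun_div (d := fun v : ℂ => v - p) hwφa.differentiableAt
        (differentiableAt_id.sub (differentiableAt_const _)) hwsub]
      have : deriv (fun v : ℂ => v - p) w = 1 := by
        simp [deriv_sub_const]
      rw [this, hψdendef]
      ring_nf
    rw [Fg_eq_of_analyticAt hwga, hderiv, inv_div, div_eq_mul_inv]
  have keyp : Fg g p = (p - p) ^ 2 * (ψden p)⁻¹ := by
    rw [Fg_eq_zero_of_pole hpole]
    simp
  rw [eventually_nhdsWithin_iff] at key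
  filter_upwards [key] with w hw
  by_cases hwp : w = p
  · subst hwp; exact keyp
  · exact hw hwp

lemma analyticAt_of_K (hg : LocUnivMeroOn g) (hbd : ∀ z : ℂ, 1/2 ≤ Complex.abs z →
    Complex.abs z ≤ 2 → Complex.abs (g z) ≤ 5) (h1 : 1/2 ≤ Complex.abs p)
    (h2 : Complex.abs p ≤ 2) : AnalyticAt ℂ g p := by
  rcases hg.2 p with ⟨ha, -⟩ | hpole
  · exact ha
  exfalso
  have htop := hpole.tendsto_norm
  have hp0 : Complex.abs p ≠ 0 := by positivity
  have key : ∀ t : ℝ, t ≠ 0 →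
      (∀ s : ℝ, 0 < s → s ≤ 1/2 → 1/2 ≤ Complex.abs (p * (1 + t*s : ℝ)) ∧
        Complex.abs (p * (1 + t*s : ℝ)) ≤ 2) → False := by
    intro t ht hK
    set m : ℝ → ℂ := fun s => p * ((1 + t*s : ℝ) : ℂ) with hm
    have hm0 : Tendsto m (𝓝[>] (0:ℝ)) (𝓝 p) := by
      have : Tendsto m (𝓝 (0:ℝ)) (𝓝 (p * ((1 + t*0 : ℝ) : ℂ))) := by
        apply Continuous.tendsto
        continuity
      simp only [mul_zero, add_zero, ofReal_one, mul_one] at this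
      exact this.mono_left nhdsWithin_le_nhds
    have hmne : ∀ᶠ s in 𝓝[>] (0:ℝ), m s ≠ p := by
      filter_upwards [self_mem_nhdsWithin] with s hs
      replace hs : 0 < s := hs
      intro hmp
      have hp' : p ≠ 0 := by
        intro h0; rw [h0] at hp0; simp at hp0
      have h0 : p * ((t*s : ℝ) : ℂ) = 0 := by
        rw [hm] at hmp
        push_cast at hmp ⊢
        linear_combination hmp
      rcases mul_eq_zero.mp h0 with h | h
      · exact hp' h
      · have : t * s = 0 := by exact_mod_cast h
        rcases mul_eq_zero.mp this with h' | h'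
        · exact ht h'
        · exact hs.ne' h'
    have hmt : Tendsto m (𝓝[>] (0:ℝ)) (𝓝[≠] p) := by
      rw [tendsto_nhdsWithin_iff]
      exact ⟨hm0, hmne⟩
    have hgt : ∀ᶠ s in 𝓝[>] (0:ℝ), 5 < ‖g (m s)‖ :=
      (htop.comp hmt).eventually_gt_atTop 5
    have hsmall : ∀ᶠ s in 𝓝[>] (0:ℝ), s ≤ 1/2 := by
      apply eventually_nhdsWithin_of_eventually_nhds
      filter_upwards [Metric.eventually_nhds_iff.mpr ⟨1/2, by norm_num,
        fun {y} hy => hy⟩] with s hs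
      rw [Real.dist_eq, sub_zero] at hs
      linarith [le_abs_self s]
    have hpos : ∀ᶠ s in 𝓝[>] (0:ℝ), 0 < s := self_mem_nhdsWithin
    obtain ⟨s, h5, hle, hs0⟩ := (hgt.and (hsmall.and hpos)).exists
    obtain ⟨hKl, hKr⟩ := hK s hs0 hle
    have := hbd (m s) hKl hKr
    rw [← Complex.norm_eq_abs] at this
    linarith [h5]
  rcases le_or_gt (Complex.abs p) 1 with hle | hgt
  · apply key 1 one_ne_zero
    intro s hs0 hs
    rw [map_mul, Complex.abs_ofReal]
    have : |1 + 1*s| = 1 + s := by rw [abs_of_pos (by linarith)]; ring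
    rw [this]
    constructor
    · nlinarith [h1]
    · nlinarith
  · apply key (-1) (by norm_num)
    intro s hs0 hs
    rw [map_mul, Complex.abs_ofReal]
    have : |1 + (-1)*s| = 1 - s := by rw [abs_of_pos (by linarith)]; ring
    rw [this]
    constructor
    · nlinarith
    · nlinarith

lemma poles_finite (hg : LocUnivMeroOn g) :
    Set.Finite ({w : ℂ | ¬ AnalyticAt ℂ g w} ∩ closedBall (0:ℂ) (1/2)) := by
  set S := {w : ℂ | ¬ AnalyticAt ℂ g w} ∩ closedBall (0:ℂ) (1/2) with hS
  have hopen : IsOpen {w : ℂ | AnalyticAt ℂ g w} := by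
    rw [isOpen_iff_mem_nhds]
    intro w hw
    exact hw.eventually_analyticAt
  have hclosed : IsClosed S := by
    apply IsClosed.inter _ (isClosed_closedBall)
    have : {w : ℂ | ¬ AnalyticAt ℂ g w} = {w : ℂ | AnalyticAt ℂ g w}ᶜ := rfl
    rw [this]
    exact hopen.isClosed_compl
  have hcpt : IsCompact S :=
    (isCompact_closedBall (0:ℂ) (1/2)).of_isClosed_subset hclosed inter_subset_right
  have hdisc : DiscreteTopology S := by
    rw [discreteTopology_subtype_iff]
    intro x hx
    have hpole : SimplePoleAt g x := (hg.2 x).resolve_left (fun h => hx.1 h.1)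
    rw [inf_principal_eq_bot]
    apply Filter.mem_of_superset (hpole.eventually_analyticAt hg)
    intro w hw
    simp only [Set.mem_compl_iff, hS, Set.mem_inter_iff, Set.mem_setOf_eq, not_and]
    intro hna
    exact absurd hw hna
  exact hcpt.finite (isDiscrete_iff_discreteTopology.mpr hdisc)

lemma exists_sqrt_on_sphere (hg : LocUnivMeroOn g) (hbd : ∀ z : ℂ, 1/2 ≤ Complex.abs z →
    Complex.abs z ≤ 2 → Complex.abs (g z) ≤ 5) :
    ∃ r : ℂ → ℂ, ContinuousOn r (sphere (0:ℂ) 1) ∧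
      ∀ z ∈ sphere (0:ℂ) 1, (r z) ^ 2 * deriv g z = 1 := by
  classical
  set S : Set ℂ := {w : ℂ | ¬ AnalyticAt ℂ g w} ∩ closedBall (0:ℂ) (1/2) with hSdef
  have hSfin : S.Finite := poles_finite hg
  set Sf : Finset ℂ := hSfin.toFinset with hSfdef
  have hSf : ∀ w : ℂ, w ∈ Sf ↔ w ∈ S := fun w => hSfin.mem_toFinset
  have hSana : ∀ w : ℂ, w ∈ ball (0:ℂ) (5/4) → w ∉ S → AnalyticAt ℂ g w := by
    intro w hw hwS
    rw [mem_ball, dist_zero_right, Complex.norm_eq_abs] at hw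
    by_contra hna
    apply hwS
    refine ⟨hna, ?_⟩
    rw [mem_closedBall, dist_zero_right, Complex.norm_eq_abs]
    by_contra hgt
    push_neg at hgt
    exact hna (analyticAt_of_K hg hbd hgt.le (by linarith))
  have hpole : ∀ w ∈ S, SimplePoleAt g w := fun w hw =>
    (hg.2 w).resolve_left (fun h => hw.1 h.1)
  have hψdata : ∀ w ∈ Sf, ∃ ψ : ℂ → ℂ, AnalyticAt ℂ ψ w ∧ ψ w ≠ 0 ∧
      ∀ᶠ v in 𝓝 w, Fg g v = (v - w)^2 * ψ v := fun w hw =>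
    Fg_pole_localform hg (hpole w ((hSf w).mp hw))
  choose! Ψ hΨa hΨne hΨev using hψdata
  set B : ℂ → ℂ := fun w => ∏ q ∈ Sf, (w - q)^2 with hBdef
  have hBana : ∀ w : ℂ, AnalyticAt ℂ B w := fun w =>
    Finset.analyticAt_fun_prod _ (fun q _ => ((analyticAt_id.sub analyticAt_const).pow 2))
  have hBne : ∀ w : ℂ, w ∉ Sf → B w ≠ 0 := by
    intro w hw
    apply Finset.prod_ne_zero_iff.mpr
    intro q hq
    exact pow_ne_zero _ (sub_ne_zero.mpr (fun h => hw (h ▸ hq)))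
  set u : ℂ → ℂ := fun w => if w ∈ Sf then Ψ w w / (∏ q ∈ Sf.erase w, (w - q)^2)
    else Fg g w / B w with hudef
  have hu : ∀ w ∈ ball (0:ℂ) (5/4), AnalyticAt ℂ u w ∧ u w ≠ 0 := by
    intro w hw
    by_cases hwS : w ∈ Sf
    · set E : ℂ → ℂ := fun v => Ψ w v / (∏ q ∈ Sf.erase w, (v - q)^2) with hEdef
      have hEden : ∀ v : ℂ, v ∉ (Sf.erase w) → (∏ q ∈ Sf.erase w, (v - q)^2) ≠ 0 := by
        intro v hv
        apply Finset.prod_ne_zero_iff.mpr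
        intro q hq
        exact pow_ne_zero _ (sub_ne_zero.mpr (fun h => hv (h ▸ hq)))
      have hwnotin : w ∉ Sf.erase w := Finset.notMem_erase w Sf
      have hEa : AnalyticAt ℂ E w := (hΨa w hwS).div
        (Finset.analyticAt_fun_prod _ (fun q _ => ((analyticAt_id.sub analyticAt_const).pow 2)))
        (hEden w hwnotin)
      have hEne : E w ≠ 0 := div_ne_zero (hΨne w hwS) (hEden w hwnotin)
      have hueq : u =ᶠ[𝓝 w] E := by
        have hopen2 : IsOpen ((↑(Sf.erase w) : Set ℂ))ᶜ :=
          (Finset.finite_toSet _).isClosed.isOpen_compl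
        filter_upwards [hΨev w hwS, hopen2.eventually_mem
          (by simpa using hwnotin)] with v hv1 hv2
        by_cases hvw : v = w
        · subst hvw
          simp only [hudef, if_pos hwS, hEdef]
        · have hvSf : v ∉ Sf := by
            intro hvin
            exact hv2 (by simp [Finset.mem_coe, Finset.mem_erase, hvw, hvin])
          simp only [hudef, if_neg hvSf, hEdef, hBdef]
          rw [hv1]
          rw [← Finset.mul_prod_erase _ _ hwS]
          rw [mul_div_mul_left _ _ (pow_ne_zero _ (sub_ne_zero.mpr hvw))]
      exact ⟨hEa.congr hueq.symm, by rw [hueq.eq_of_nhds]; exact hEne⟩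
    · have hwa : AnalyticAt ℂ g w := hSana w hw (fun h => hwS ((hSf w).mpr h))
      obtain ⟨hFa, hFne⟩ := Fg_analyticAt_of_analyticAt hg hwa
      have hopen2 : IsOpen ((↑Sf : Set ℂ))ᶜ := (Finset.finite_toSet _).isClosed.isOpen_compl
      have hueq : u =ᶠ[𝓝 w] fun v => Fg g v / B v := by
        filter_upwards [hopen2.eventually_mem (by simpa using hwS)] with v hv
        simp only [hudef, if_neg (show v ∉ Sf by simpa using hv)]
      refine ⟨(hFa.div (hBana w) (hBne w hwS)).congr hueq.symm, ?_⟩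
      rw [hueq.eq_of_nhds]
      exact div_ne_zero hFne (hBne w hwS)
  have huB : ∀ w : ℂ, w ∉ Sf → u w * B w = Fg g w := by
    intro w hw
    simp only [hudef, if_neg hw]
    exact div_mul_cancel₀ _ (hBne w hw)
  have hderivu : ∀ w ∈ ball (0:ℂ) (5/4), AnalyticAt ℂ (deriv u) w := fun w hw =>
    analyticAt_deriv (hu w hw).1
  set Φ : ℂ → ℂ := fun w => deriv u w / u w with hΦdef
  have hsub : ∀ w : ℂ, w ∈ closedBall (0:ℂ) 1 → w ∈ ball (0:ℂ) (5/4) := by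
    intro w hw
    rw [mem_closedBall, dist_zero_right] at hw
    rw [mem_ball, dist_zero_right]
    linarith
  have hΦc : ContinuousOn Φ (closedBall (0:ℂ) 1) := by
    intro w hw
    have hw' := hsub w hw
    exact (((hderivu w hw').continuousAt).div ((hu w hw').1.continuousAt)
      (hu w hw').2).continuousWithinAt
  set tc : ℝ → ℝ := fun t => min 1 (max 0 t) with htcdef
  have htc01 : ∀ t : ℝ, 0 ≤ tc t ∧ tc t ≤ 1 := by
    intro t
    constructor
    · exact le_min (by norm_num) (le_max_left _ _)
    · exact min_le_left _ _
  have htc_mem : ∀ (t : ℝ) (z : ℂ), z ∈ closedBall (0:ℂ) 1 →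
      ((tc t : ℝ) : ℂ) * z ∈ closedBall (0:ℂ) 1 := by
    intro t z hz
    rw [mem_closedBall, dist_zero_right] at hz ⊢
    rw [norm_mul, Complex.norm_real, Real.norm_eq_abs, _root_.abs_of_nonneg (htc01 t).1]
    nlinarith [(htc01 t).1, (htc01 t).2, norm_nonneg z]
  have htc_cont : Continuous tc := continuous_const.min (continuous_const.max continuous_id)
  have htc_eq : ∀ t ∈ Icc (0:ℝ) 1, tc t = t := by
    intro t ht
    simp only [htcdef]
    rw [max_eq_right ht.1, min_eq_right ht.2]
  set IG : ℂ → ℝ → ℂ := fun z t => Φ (((tc t : ℝ) : ℂ) * z) * z with hIGdef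
  have hIGcont : ∀ z ∈ closedBall (0:ℂ) 1, Continuous fun t => IG z t := by
    intro z hz
    apply Continuous.mul _ continuous_const
    apply hΦc.comp_continuous
    · exact (Complex.continuous_ofReal.comp htc_cont).mul continuous_const
    · intro t
      exact htc_mem t z hz
  set L : ℂ → ℂ := fun z => ∫ t in (0:ℝ)..1, IG z t with hLdef
  have hkey : ∀ z ∈ closedBall (0:ℂ) 1, u z = u 0 * Complex.exp (L z) := by
    intro z hz
    set J : ℝ → ℂ := fun t => ∫ s in (0:ℝ)..t, IG z s with hJdef
    have hJd : ∀ t : ℝ, HasDerivAt J (IG z t) t := fun t =>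
      ((hIGcont z hz).integral_hasStrictDerivAt 0 t).hasDerivAt
    have hmem : ∀ t ∈ Icc (0:ℝ) 1, ((t:ℝ):ℂ) * z ∈ ball (0:ℂ) (5/4) := by
      intro t ht
      exact hsub _ (by simpa [htc_eq t ht] using htc_mem t z hz)
    set N : ℝ → ℂ := fun t => u (((t:ℝ):ℂ) * z) * Complex.exp (-J t) with hNdef
    have hNd : ∀ t ∈ Ico (0:ℝ) 1, HasDerivAt N 0 t := by
      intro t ht
      have htI : t ∈ Icc (0:ℝ) 1 := ⟨ht.1, le_of_lt ht.2⟩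
      have hz' := hmem t htI
      have hud : HasDerivAt (fun s : ℝ => u (((s:ℝ):ℂ) * z))
          (deriv u (((t:ℝ):ℂ) * z) * z) t := by
        have h1 : HasDerivAt u (deriv u (((t:ℝ):ℂ)*z)) (((t:ℝ):ℂ)*z) :=
          ((hu _ hz').1.differentiableAt).hasDerivAt
        have h3 : HasDerivAt (fun s : ℂ => s * z) z ((t:ℝ):ℂ) := by
          simpa using (hasDerivAt_id ((t:ℝ):ℂ)).mul_const z
        have h2 : HasDerivAt (fun s : ℂ => u (s * z))
            (deriv u (((t:ℝ):ℂ)*z) * z) ((t:ℝ):ℂ) := by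
          exact h1.comp ((t:ℝ):ℂ) h3
        exact h2.comp_ofReal
      have hJd' : HasDerivAt (fun s : ℝ => Complex.exp (-J s))
          (-(Complex.exp (-J t) * IG z t)) t := by
        simpa using ((hJd t).neg).cexp
      have hprod := hud.mul hJd'
      have heq : deriv u (((t:ℝ):ℂ) * z) * z * Complex.exp (-J t) +
          u (((t:ℝ):ℂ) * z) * -(Complex.exp (-J t) * IG z t) = 0 := by
        simp only [hIGdef, htc_eq t htI, hΦdef]
        have hune := (hu _ hz').2
        field_simp
        ring
      exact heq ▸ hprod
    have hJcont : Continuous J :=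
      continuous_iff_continuousAt.mpr (fun t => (hJd t).differentiableAt.continuousAt)
    have hNc : ContinuousOn N (Icc (0:ℝ) 1) := by
      apply ContinuousOn.mul
      · intro t ht
        have hcin : ContinuousAt (fun s : ℝ => ((s:ℂ) * z)) t :=
          (Complex.continuous_ofReal.mul continuous_const).continuousAt
        exact ContinuousAt.continuousWithinAt
          (ContinuousAt.comp (g := u) (f := fun s : ℝ => ((s:ℂ) * z)) (x := t)
            ((hu _ (hmem t ht)).1.continuousAt) hcin)
      · exact (hJcont.neg.cexp).continuousOn
    have hconst := constant_of_has_deriv_right_zero hNc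
      (fun t ht => (hNd t ht).hasDerivWithinAt) 1 (right_mem_Icc.mpr zero_le_one)
    simp only [hNdef, Complex.ofReal_one, one_mul, Complex.ofReal_zero, zero_mul] at hconst
    rw [hJdef] at hconst
    simp only [intervalIntegral.integral_same, neg_zero, Complex.exp_zero, mul_one] at hconst
    have hLz : (∫ s in (0:ℝ)..1, IG z s) = L z := rfl
    rw [hLz] at hconst
    rw [Complex.exp_neg] at hconst
    rw [mul_inv_eq_iff_eq_mul₀ (Complex.exp_ne_zero _)] at hconst
    exact hconst
  -- continuity of L on the sphere
  have hLc : ContinuousOn L (sphere (0:ℂ) 1) := by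
    rw [continuousOn_iff_continuous_restrict]
    have hre : (sphere (0:ℂ) 1).restrict L = fun z : sphere (0:ℂ) 1 =>
        ∫ t in (0:ℝ)..1, IG (z:ℂ) t := rfl
    change Continuous (fun z : sphere (0:ℂ) 1 => ∫ t in (0:ℝ)..1, IG (z:ℂ) t)
    apply intervalIntegral.continuous_parametric_intervalIntegral_of_continuous'
    have huncur : (Function.uncurry fun (z : sphere (0:ℂ) 1) (t : ℝ) => IG (z:ℂ) t) =
        fun p : (sphere (0:ℂ) 1) × ℝ => Φ (((tc p.2 : ℝ) : ℂ) * (p.1 : ℂ)) * (p.1 : ℂ) := rfl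
    rw [huncur]
    apply Continuous.mul
    · apply hΦc.comp_continuous
      · exact (Complex.continuous_ofReal.comp (htc_cont.comp continuous_snd)).mul
          (continuous_subtype_val.comp continuous_fst)
      · rintro ⟨⟨z, hz⟩, t⟩
        exact htc_mem t z (sphere_subset_closedBall hz)
    · exact continuous_subtype_val.comp continuous_fst
  have h0ball : (0:ℂ) ∈ ball (0:ℂ) (5/4) := by
    rw [mem_ball, dist_zero_right]
    norm_num
  have hu0 : u 0 ≠ 0 := (hu 0 h0ball).2
  set w₀ : ℂ := Complex.exp (Complex.log (u 0) / 2) with hw₀def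
  have hw₀sq : w₀ ^ 2 = u 0 := by
    rw [hw₀def, pow_two, ← Complex.exp_add, add_halves, Complex.exp_log hu0]
  set r : ℂ → ℂ := fun z => w₀ * Complex.exp (L z / 2) * ∏ q ∈ Sf, (z - q) with hrdef
  refine ⟨r, ?_, ?_⟩
  · apply ContinuousOn.mul
    · apply ContinuousOn.mul continuousOn_const
      exact (hLc.div_const 2).cexp
    · exact (continuous_finset_prod _ (fun q _ => continuous_id.sub continuous_const)).continuousOn
  · intro z hz
    have hz1 : Complex.abs z = 1 := by
      rw [mem_sphere_iff_norm, sub_zero, Complex.norm_eq_abs] at hz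
      exact hz
    have hzK : AnalyticAt ℂ g z := analyticAt_of_K hg hbd (by rw [hz1]; norm_num)
      (by rw [hz1]; norm_num)
    have hzSf : z ∉ Sf := by
      rw [hSf]
      intro h
      exact h.1 hzK
    have hzcb : z ∈ closedBall (0:ℂ) 1 := sphere_subset_closedBall hz
    have hrsq : r z ^ 2 = Fg g z := by
      have hexpand : r z ^ 2 = (w₀^2) * (Complex.exp (L z / 2))^2 * ∏ q ∈ Sf, (z - q)^2 := by
        simp only [hrdef]
        rw [Finset.prod_pow]
        ring
      rw [hexpand, hw₀sq]
      have hexp2 : (Complex.exp (L z / 2))^2 = Complex.exp (L z) := by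
        rw [pow_two, ← Complex.exp_add, add_halves]
      rw [hexp2]
      have hk := hkey z hzcb
      rw [← hk]
      exact huB z hzSf
    rw [hrsq, Fg_eq_of_analyticAt hzK]
    exact inv_mul_cancel₀ (deriv_ne_zero_of_analyticAt hg hzK)

lemma chordal_lemma {a b : ℂ} (hb : Complex.abs b ≤ 4)
    (h : Complex.abs (a - b) /
      (Real.sqrt (1 + Complex.abs a ^ 2) * Real.sqrt (1 + Complex.abs b ^ 2)) < 1/1000) :
    Complex.abs (a - b) ≤ 26/1000 := by
  set d := Complex.abs (a - b) with hd
  have hd0 : 0 ≤ d := AbsoluteValue.nonneg _ _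
  have ha0 : 0 ≤ Complex.abs a := AbsoluteValue.nonneg _ _
  have hb0 : 0 ≤ Complex.abs b := AbsoluteValue.nonneg _ _
  set sa := Real.sqrt (1 + Complex.abs a ^ 2) with hsa
  set sb := Real.sqrt (1 + Complex.abs b ^ 2) with hsb
  have hsa1 : 1 ≤ sa := by
    have h1 : Real.sqrt 1 ≤ sa := Real.sqrt_le_sqrt (by nlinarith)
    simpa using h1
  have hsb1 : 1 ≤ sb := by
    have h1 : Real.sqrt 1 ≤ sb := Real.sqrt_le_sqrt (by nlinarith)
    simpa using h1
  have hsb5 : sb ≤ 5 := by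
    have h25 : Real.sqrt 25 = 5 := by
      rw [show (25:ℝ) = 5^2 by norm_num, Real.sqrt_sq (by norm_num : (0:ℝ) ≤ 5)]
    rw [hsb, ← h25]
    apply Real.sqrt_le_sqrt
    nlinarith
  have hsa_le : sa ≤ 1 + Complex.abs a := by
    rw [hsa, show 1 + Complex.abs a = Real.sqrt ((1 + Complex.abs a)^2) from
      (Real.sqrt_sq (by positivity)).symm]
    apply Real.sqrt_le_sqrt
    nlinarith
  have habs_a : Complex.abs a ≤ Complex.abs b + d := by
    calc Complex.abs a = Complex.abs (b + (a - b)) := by congr 1; ring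
    _ ≤ Complex.abs b + d := Complex.abs.add_le _ _
  have hpos : 0 < sa * sb := by nlinarith
  rw [div_lt_iff₀ hpos] at h
  have hsa5d : sa ≤ 5 + d := by linarith
  nlinarith

lemma deriv_close {G : ℂ → ℂ}
    (hana : ∀ w : ℂ, 1/2 ≤ Complex.abs w → Complex.abs w ≤ 2 → AnalyticAt ℂ G w)
    (hclose : ∀ w : ℂ, 1/2 ≤ Complex.abs w → Complex.abs w ≤ 2 →
      Complex.abs (G w - (-1 / w^2)) ≤ 26/1000) :
    ∀ z ∈ sphere (0:ℂ) 1, Complex.abs (deriv G z - 2/z^3) ≤ 104/1000 := by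
  intro z hz
  have hz1 : Complex.abs z = 1 := by
    rw [mem_sphere_iff_norm, sub_zero, Complex.norm_eq_abs] at hz
    exact hz
  have hz0 : z ≠ 0 := by
    intro h0
    rw [h0] at hz1
    simp at hz1
  set h : ℂ → ℂ := fun w => G w - (-1 / w^2) with hhdef
  have hrange : ∀ w : ℂ, w ∈ closedBall z (1/4) →
      1/2 ≤ Complex.abs w ∧ Complex.abs w ≤ 2 ∧ w ≠ 0 := by
    intro w hw
    rw [mem_closedBall, Complex.dist_eq, Complex.norm_eq_abs] at hw
    have htr1 : Complex.abs z ≤ Complex.abs w + Complex.abs (z - w) := by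
      calc Complex.abs z = Complex.abs (w + (z - w)) := by congr 1; ring
      _ ≤ _ := Complex.abs.add_le _ _
    have htr2 : Complex.abs w ≤ Complex.abs z + Complex.abs (w - z) := by
      calc Complex.abs w = Complex.abs (z + (w - z)) := by congr 1; ring
      _ ≤ _ := Complex.abs.add_le _ _
    have hzw : Complex.abs (z - w) = Complex.abs (w - z) := by
      rw [← AbsoluteValue.map_neg Complex.abs]
      congr 1
      ring
    have hlow : 3/4 ≤ Complex.abs w := by
      rw [hzw] at htr1
      linarith [hz1 ▸ htr1]
    refine ⟨by linarith, by linarith [hz1 ▸ htr2], ?_⟩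
    intro h0
    rw [h0] at hlow
    simp at hlow
    linarith
  have hdiff : DifferentiableOn ℂ h (closedBall z (1/4)) := by
    intro w hw
    obtain ⟨hw1, hw2, hw0⟩ := hrange w hw
    apply DifferentiableAt.differentiableWithinAt
    apply DifferentiableAt.sub
    · exact (hana w hw1 hw2).differentiableAt
    · exact (differentiableAt_const (-1:ℂ)).div (differentiableAt_pow 2) (pow_ne_zero 2 hw0)
  have hdc : DiffContOnCl ℂ h (ball z (1/4)) := by
    apply DifferentiableOn.diffContOnCl
    rwa [closure_ball z (by norm_num : (1/4:ℝ) ≠ 0)]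
  have hC : ∀ w ∈ sphere z (1/4), ‖h w‖ ≤ 26/1000 := by
    intro w hw
    have hw' : w ∈ closedBall z (1/4) := sphere_subset_closedBall hw
    obtain ⟨hw1, hw2, -⟩ := hrange w hw'
    rw [Complex.norm_eq_abs]
    exact hclose w hw1 hw2
  have hest := Complex.norm_deriv_le_of_forall_mem_sphere_norm_le
    (by norm_num : (0:ℝ) < 1/4) hdc hC
  have hdh : deriv h z = deriv G z - 2/z^3 := by
    have hG : DifferentiableAt ℂ G z :=
      (hana z (by rw [hz1]; norm_num) (by rw [hz1]; norm_num)).differentiableAt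
    have hI : HasDerivAt (fun w : ℂ => -1 / w^2) (2 / z^3) z := by
      have h2 : HasDerivAt (fun w : ℂ => w^2) (2*z) z := by
        simpa using hasDerivAt_pow 2 z
      have h3 := h2.fun_inv (pow_ne_zero 2 hz0)
      have h4 := h3.const_mul (-1 : ℂ)
      have hfn : (fun w : ℂ => -1 * (w^2)⁻¹) = fun w : ℂ => -1 / w^2 := by
        funext w
        ring
      rw [hfn] at h4
      refine h4.congr_deriv ?_
      rw [mul_div_assoc', div_eq_div_iff (pow_ne_zero 2 (pow_ne_zero 2 hz0)) (pow_ne_zero 3 hz0)]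
      ring
    rw [hhdef]
    rw [deriv_fun_sub hG hI.differentiableAt, hI.deriv]
  rw [hdh] at hest
  rw [Complex.norm_eq_abs] at hest
  linarith [hest]

end Helpers

/-- For K = {1/2 ≤ |z| ≤ 2} and f(z) = -1/z², no sequence of locally univalent meromorphic
functions on all of ℂ converges to f uniformly on K in the chordal metric. -/
theorem no_loc_univ_mero_approx :
    ¬ ∃ g : ℕ → ℂ → ℂ, (∀ n, LocUnivMeroOn (g n)) ∧
      ∀ ε > (0:ℝ), ∃ N : ℕ, ∀ n ≥ N,
        ∀ z ∈ {z : ℂ | 1 / 2 ≤ ‖z‖ ∧ ‖z‖ ≤ 2},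
          chordal (g n z) (-1 / z ^ 2) < ε := by
  rintro ⟨g, hloc, happ⟩
  obtain ⟨N, hN⟩ := happ (1/1000) (by norm_num)
  set G := g N with hGdef
  have hGloc := hloc N
  have hKc : ∀ z : ℂ, 1/2 ≤ Complex.abs z → Complex.abs z ≤ 2 →
      chordal (G z) (-1 / z^2) < 1/1000 := fun z h1 h2 => hN N le_rfl z ⟨h1, h2⟩
  have hfbd : ∀ z : ℂ, 1/2 ≤ Complex.abs z → Complex.abs (-1 / z^2) ≤ 4 := by
    intro z h1
    rw [map_div₀, map_pow]
    simp only [map_neg_eq_map, map_one]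
    rw [div_le_iff₀ (by positivity)]
    nlinarith
  have hclose : ∀ z : ℂ, 1/2 ≤ Complex.abs z → Complex.abs z ≤ 2 →
      Complex.abs (G z - (-1 / z^2)) ≤ 26/1000 := by
    intro z h1 h2
    have hcc := hKc z h1 h2
    unfold chordal at hcc
    exact chordal_lemma (hfbd z h1) hcc
  have hbd5 : ∀ z : ℂ, 1/2 ≤ Complex.abs z → Complex.abs z ≤ 2 → Complex.abs (G z) ≤ 5 := by
    intro z h1 h2
    have hc := hclose z h1 h2
    have hf := hfbd z h1
    calc Complex.abs (G z) = Complex.abs ((G z - (-1/z^2)) + (-1/z^2)) := by congr 1; ring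
    _ ≤ Complex.abs (G z - (-1/z^2)) + Complex.abs (-1/z^2) := Complex.abs.add_le _ _
    _ ≤ 5 := by linarith
  have hana : ∀ w : ℂ, 1/2 ≤ Complex.abs w → Complex.abs w ≤ 2 → AnalyticAt ℂ G w :=
    fun w h1 h2 => analyticAt_of_K hGloc hbd5 h1 h2
  have hder := deriv_close hana hclose
  obtain ⟨r, hrc, hrsq⟩ := exists_sqrt_on_sphere hGloc hbd5
  -- the final contradiction
  set q : ℂ → ℂ := fun z => 2 * r z * r (-z) * (Complex.I * z^3)⁻¹ with hqdef
  have hsphneg : ∀ z : ℂ, z ∈ sphere (0:ℂ) 1 → -z ∈ sphere (0:ℂ) 1 := by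
    intro z hz
    rw [mem_sphere_iff_norm, sub_zero] at hz ⊢
    simpa using hz
  have habs1 : ∀ z : ℂ, z ∈ sphere (0:ℂ) 1 → Complex.abs z = 1 := by
    intro z hz
    rw [mem_sphere_iff_norm, sub_zero, Complex.norm_eq_abs] at hz
    exact hz
  -- key bound
  have hq2 : ∀ z ∈ sphere (0:ℂ) 1, Complex.abs (q z ^ 2 - 1) < 1/2 := by
    intro z hz
    have hz1 := habs1 z hz
    have hz0 : z ≠ 0 := by
      intro h0
      rw [h0] at hz1
      simp at hz1
    have hzneg := hsphneg z hz
    set A : ℂ := z^3 * deriv G z with hAdef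
    set Bv : ℂ := (-z)^3 * deriv G (-z) with hBvdef
    have hA : Complex.abs (A - 2) ≤ 104/1000 := by
      have h1 := hder z hz
      have : A - 2 = z^3 * (deriv G z - 2/z^3) := by
        field_simp
        ring
      rw [this, map_mul, map_pow, hz1]
      simpa using h1
    have hB : Complex.abs (Bv - 2) ≤ 104/1000 := by
      have h1 := hder (-z) hzneg
      have habsneg : Complex.abs (-z) = 1 := habs1 _ hzneg
      have hnz0 : (-z) ≠ 0 := neg_ne_zero.mpr hz0
      have : Bv - 2 = (-z)^3 * (deriv G (-z) - 2/(-z)^3) := by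
        field_simp
        ring
      rw [this, map_mul, map_pow, habsneg]
      simpa using h1
    have habsA : 2 - 104/1000 ≤ Complex.abs A := by
      have : Complex.abs 2 ≤ Complex.abs A + Complex.abs (2 - A) := by
        calc Complex.abs 2 = Complex.abs (A + (2 - A)) := by congr 1; ring
        _ ≤ _ := Complex.abs.add_le _ _
      have h2 : Complex.abs (2 - A) = Complex.abs (A - 2) := by
        rw [← AbsoluteValue.map_neg Complex.abs]
        congr 1
        ring
      rw [Complex.abs_two] at this
      rw [h2] at this
      linarith
    have habsB : 2 - 104/1000 ≤ Complex.abs Bv := by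
      have : Complex.abs 2 ≤ Complex.abs Bv + Complex.abs (2 - Bv) := by
        calc Complex.abs 2 = Complex.abs (Bv + (2 - Bv)) := by congr 1; ring
        _ ≤ _ := Complex.abs.add_le _ _
      have h2 : Complex.abs (2 - Bv) = Complex.abs (Bv - 2) := by
        rw [← AbsoluteValue.map_neg Complex.abs]
        congr 1
        ring
      rw [Complex.abs_two, h2] at this
      linarith
    have habsAle : Complex.abs A ≤ 2 + 104/1000 := by
      have : Complex.abs A ≤ Complex.abs (A - 2) + Complex.abs 2 := by
        calc Complex.abs A = Complex.abs ((A - 2) + 2) := by congr 1; ring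
        _ ≤ _ := Complex.abs.add_le _ _
      rw [Complex.abs_two] at this
      linarith
    have hABne : A * Bv ≠ 0 := by
      intro h0
      rcases mul_eq_zero.mp h0 with h0 | h0
      · rw [h0] at habsA
        simp at habsA
        linarith
      · rw [h0] at habsB
        simp at habsB
        linarith
    have hq2eq : q z ^ 2 * (A * Bv) = 4 := by
      have h1 := hrsq z hz
      have h2 := hrsq (-z) hzneg
      have hkey : q z ^ 2 * (A * Bv) =
          4 * (r z ^ 2 * deriv G z) * (r (-z) ^ 2 * deriv G (-z)) := by
        simp only [hqdef, hAdef, hBvdef]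
        have hI0 : Complex.I * z^3 ≠ 0 := mul_ne_zero Complex.I_ne_zero (pow_ne_zero 3 hz0)
        field_simp
        ring_nf
        simp [Complex.I_sq]
      rw [hkey, h1, h2]
      ring
    have hqform : q z ^ 2 - 1 = (4 - A * Bv) / (A * Bv) := by
      rw [eq_div_iff hABne]
      linear_combination hq2eq
    have hnum : Complex.abs (4 - A * Bv) ≤ 2 * (104/1000) + (2 + 104/1000) * (104/1000) := by
      have hsplit : 4 - A * Bv = (2 - A) * 2 + A * (2 - Bv) := by ring
      rw [hsplit]
      calc Complex.abs ((2 - A) * 2 + A * (2 - Bv)) ≤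
          Complex.abs ((2 - A) * 2) + Complex.abs (A * (2 - Bv)) := Complex.abs.add_le _ _
      _ = Complex.abs (2 - A) * 2 + Complex.abs A * Complex.abs (2 - Bv) := by
          rw [map_mul, map_mul, Complex.abs_two]
      _ ≤ 2 * (104/1000) + (2 + 104/1000) * (104/1000) := by
          have e1 : Complex.abs (2 - A) = Complex.abs (A - 2) := by
            rw [← AbsoluteValue.map_neg Complex.abs]; congr 1; ring
          have e2 : Complex.abs (2 - Bv) = Complex.abs (Bv - 2) := by
            rw [← AbsoluteValue.map_neg Complex.abs]; congr 1; ring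
          rw [e1, e2]
          have := AbsoluteValue.nonneg Complex.abs (Bv - 2)
          nlinarith [AbsoluteValue.nonneg Complex.abs A]
    rw [hqform, map_div₀]
    have hden : (2 - 104/1000) * (2 - 104/1000) ≤ Complex.abs (A * Bv) := by
      rw [map_mul]
      nlinarith
    have hdenpos : (0:ℝ) < Complex.abs (A * Bv) := by nlinarith
    rw [div_lt_iff₀ hdenpos]
    nlinarith
  -- connectedness argument
  have hqcont : ContinuousOn q (sphere (0:ℂ) 1) := by
    apply ContinuousOn.mul
    · apply ContinuousOn.mul
      · exact continuousOn_const.mul hrc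
      · exact hrc.comp continuousOn_neg (fun z hz => hsphneg z hz)
    · apply ContinuousOn.inv₀
      · exact (continuous_const.mul (continuous_pow 3)).continuousOn
      · intro z hz
        have hz0 : z ≠ 0 := by
          intro h0
          have := habs1 z hz
          rw [h0] at this
          simp at this
        exact mul_ne_zero Complex.I_ne_zero (pow_ne_zero 3 hz0)
  have hconn : IsPreconnected (q '' sphere (0:ℂ) 1) := by
    have hrank : 1 < Module.rank ℝ ℂ := by
      rw [rank_real_complex]
      norm_num
    exact ((isConnected_sphere hrank (0:ℂ) zero_le_one).image q hqcont).isPreconnected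
  have himg : q '' sphere (0:ℂ) 1 ⊆ ball (1:ℂ) (3/4) ∪ ball (-1:ℂ) (3/4) := by
    rintro w ⟨z, hz, rfl⟩
    have h2 := hq2 z hz
    by_contra hcon
    rw [Set.mem_union, not_or] at hcon
    obtain ⟨hc1, hc2⟩ := hcon
    rw [mem_ball, Complex.dist_eq, Complex.norm_eq_abs, not_lt] at hc1 hc2
    have hfact : Complex.abs (q z ^2 - 1) = Complex.abs (q z - 1) * Complex.abs (q z + 1) := by
      rw [← map_mul]
      congr 1
      ring
    have he : Complex.abs (q z + 1) = Complex.abs (q z - (-1)) := by congr 1; ring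
    rw [hfact, he] at h2
    nlinarith [AbsoluteValue.nonneg Complex.abs (q z - 1),
      AbsoluteValue.nonneg Complex.abs (q z - (-1))]
  have hdisj : Disjoint (ball (1:ℂ) (3/4)) (ball (-1:ℂ) (3/4)) := by
    apply ball_disjoint_ball
    rw [Complex.dist_eq, Complex.norm_eq_abs]
    have : Complex.abs ((1:ℂ) - (-1)) = 2 := by norm_num
    rw [this]
    norm_num
  have h1s : (1:ℂ) ∈ sphere (0:ℂ) 1 := by
    rw [mem_sphere_iff_norm, sub_zero]
    simp
  have hm1s : (-1:ℂ) ∈ sphere (0:ℂ) 1 := hsphneg 1 h1s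
  have hq1 : q 1 ∈ q '' sphere (0:ℂ) 1 := ⟨1, h1s, rfl⟩
  have hqm1 : q (-1) ∈ q '' sphere (0:ℂ) 1 := ⟨-1, hm1s, rfl⟩
  have hqneg : q (-1) = - q 1 := by
    simp only [hqdef]
    have h1 : ((-1:ℂ))^3 = -1 := by norm_num
    have h2 : ((1:ℂ))^3 = 1 := by norm_num
    rw [h1, h2]
    have h3 : (-(1:ℂ)) = -1 := rfl
    rw [show -(-1:ℂ) = 1 by ring]
    field_simp
  rcases hconn.subset_or_subset isOpen_ball isOpen_ball hdisj himg with hsub | hsub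
  · have m1 := hsub hq1
    have m2 := hsub hqm1
    rw [mem_ball, Complex.dist_eq, Complex.norm_eq_abs] at m1 m2
    rw [hqneg] at m2
    have : Complex.abs ((q 1 - 1) + (- q 1 - 1)) ≤ Complex.abs (q 1 - 1) +
        Complex.abs (- q 1 - 1) := Complex.abs.add_le _ _
    rw [show (q 1 - 1) + (- q 1 - 1) = -2 by ring] at this
    have habs2 : Complex.abs (-2 : ℂ) = 2 := by norm_num
    rw [habs2] at this
    linarith
  · have m1 := hsub hq1
    have m2 := hsub hqm1
    rw [mem_ball, Complex.dist_eq, Complex.norm_eq_abs] at m1 m2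
    rw [hqneg] at m2
    have : Complex.abs ((q 1 - (-1)) + (- q 1 - (-1))) ≤ Complex.abs (q 1 - (-1)) +
        Complex.abs (- q 1 - (-1)) := Complex.abs.add_le _ _
    rw [show (q 1 - (-1)) + (- q 1 - (-1)) = 2 by ring] at this
    rw [Complex.abs_two] at this
    linarith
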